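/- Let α be a finite type and let g : α → α → Bool be regular with respect to a subgroup S of Equiv.Perm α × Equiv.Perm α. If both fibers g⁻¹(true) = {(x,y) : g x y = true} and g⁻¹(false) are nonempty, then the cardinality of S equals the cardinality of g⁻¹(true), which equals the cardinality of g⁻¹(false); consequently each fiber has cardinality (Fintype.card α)² / 2. -/
import Mathlib


/-- A bipartite Boolean function `g` is regular with respect to a subgroup `S` of
`Equiv.Perm α × Equiv.Perm α` if the coordinatewise action of `S` preserves `g` and `S`
acts simply transitively on each fiber of `g`. -/
def IsRegularGadget {α : Type*} (g : α → α → Bool)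
    (S : Subgroup (Equiv.Perm α × Equiv.Perm α)) : Prop :=
  (∀ s ∈ S, ∀ x y : α, g (s.1 x) (s.2 y) = g x y) ∧
  (∀ x₁ y₁ x₂ y₂ : α, g x₁ y₁ = g x₂ y₂ →
    ∃! s : S, ((s : Equiv.Perm α × Equiv.Perm α).1 x₁,
               (s : Equiv.Perm α × Equiv.Perm α).2 y₁) = (x₂, y₂))

lemma card_S_eq_fiber {α : Type*} [Fintype α]
    (g : α → α → Bool) (S : Subgroup (Equiv.Perm α × Equiv.Perm α))
    (hreg : IsRegularGadget g S) (b : Bool) (p₀ : α × α) (hp₀ : g p₀.1 p₀.2 = b) :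
    Nat.card S = Nat.card {p : α × α | g p.1 p.2 = b} := by
  have hf : ∀ s : S, g ((s : Equiv.Perm α × Equiv.Perm α).1 p₀.1)
      ((s : Equiv.Perm α × Equiv.Perm α).2 p₀.2) = b := by
    intro s
    rw [hreg.1 s s.2 p₀.1 p₀.2, hp₀]
  let f : S → {p : α × α | g p.1 p.2 = b} :=
    fun s => ⟨((s : Equiv.Perm α × Equiv.Perm α).1 p₀.1,
               (s : Equiv.Perm α × Equiv.Perm α).2 p₀.2), hf s⟩
  have hbij : Function.Bijective f := by
    constructor
    · intro s t hst
      have h : g p₀.1 p₀.2 = g ((t : Equiv.Perm α × Equiv.Perm α).1 p₀.1)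
          ((t : Equiv.Perm α × Equiv.Perm α).2 p₀.2) := by rw [hf t, hp₀]
      obtain ⟨u, _, hu⟩ := hreg.2 p₀.1 p₀.2 _ _ h
      have hs := hu s (by
        have := congrArg Subtype.val hst
        simpa [f, Prod.ext_iff] using this)
      have ht := hu t rfl
      rw [hs, ht]
    · rintro ⟨p, hp⟩
      have h : g p₀.1 p₀.2 = g p.1 p.2 := by rw [hp₀, hp]
      obtain ⟨s, hs, _⟩ := hreg.2 p₀.1 p₀.2 p.1 p.2 h
      exact ⟨s, by simpa [f, Subtype.ext_iff, Prod.ext_iff] using hs⟩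
  exact Nat.card_eq_of_bijective f hbij

/-- If `g` is regular w.r.t. `S` and both fibers are nonempty, then `|S|` equals the size
of each fiber, the two fibers have equal size, and each fiber has size `|α|² / 2`. -/
theorem card_fibers_of_regular {α : Type*} [Fintype α]
    (g : α → α → Bool) (S : Subgroup (Equiv.Perm α × Equiv.Perm α))
    (hreg : IsRegularGadget g S)
    (h1 : {p : α × α | g p.1 p.2 = true}.Nonempty)
    (h0 : {p : α × α | g p.1 p.2 = false}.Nonempty) :
    Nat.card S = Nat.card {p : α × α | g p.1 p.2 = true} ∧
    Nat.card {p : α × α | g p.1 p.2 = true} = Nat.card {p : α × α | g p.1 p.2 = false} ∧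
    Nat.card {p : α × α | g p.1 p.2 = true} = (Fintype.card α) ^ 2 / 2 := by
  obtain ⟨p₁, hp₁⟩ := h1
  obtain ⟨p₀, hp₀⟩ := h0
  have ht := card_S_eq_fiber g S hreg true p₁ hp₁
  have hfalse := card_S_eq_fiber g S hreg false p₀ hp₀
  have heq : Nat.card {p : α × α | g p.1 p.2 = true}
      = Nat.card {p : α × α | g p.1 p.2 = false} := ht ▸ hfalse
  refine ⟨ht, heq, ?_⟩
  have hcompl : {p : α × α | g p.1 p.2 = false} = {p : α × α | g p.1 p.2 = true}ᶜ := by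
    ext p; simp
  have hsum : Nat.card {p : α × α | g p.1 p.2 = true}
      + Nat.card {p : α × α | g p.1 p.2 = false} = Fintype.card α ^ 2 := by
    rw [hcompl, Nat.card_coe_set_eq, Nat.card_coe_set_eq,
      Set.ncard_add_ncard_compl]
    simp [Nat.card_eq_fintype_card, sq]
  omega
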